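/- Let D be a knot diagram with c(D) crossings. Then the region unknotting number satisfies u_R(D) ≤ c(D)/2 + 1. -/

import Mathlib

/-!
STATEMENT 10: for a knot diagram `D` with `c(D)` crossings,
`u_R(D) ≤ c(D)/2 + 1`.

Corner model of a knot diagram `D` with `n = c(D)` crossings: `corner c i` is
the region at the `i`-th corner (cyclic order) of crossing `c`; adjacent
corners lie in distinct regions.  By Euler's formula `D` has `n + 2` regions
(`heuler`).  `col` is a checkerboard coloring (regions at adjacent corners get
different colors), which every diagram admits.  `M` is the corner-parity
region-crossing incidence matrix over `F₂`; region crossing changes at a set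
`P` of regions replace the over/under vector `over` by
`over + ∑_{R ∈ P} M R ·`.  `Unknotted v` says that the underlying curve with
over/under data `v` is a diagram of the trivial knot; the hypothesis
`hunknottable` is the theorem that region crossing changes can unknot `D`.

The region unknotting number `u_R(D)` is the least cardinality of a set of
regions whose region crossing changes turn `D` into a trivial knot diagram.
-/
theorem region_unknotting_number_le_half_crossings_add_one
    {n : ℕ} {Region : Type*} [Fintype Region] [DecidableEq Region]
    (corner : Fin n → Fin 4 → Region)
    (hadj : ∀ c i, corner c i ≠ corner c (i + 1))
    (heuler : Fintype.card Region = n + 2)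
    (col : Region → Bool)
    (hcol : ∀ c i, col (corner c i) ≠ col (corner c (i + 1)))
    (M : Region → Fin n → ZMod 2)
    (hM : ∀ R c, M R c =
      ((Finset.univ.filter fun i : Fin 4 => corner c i = R).card : ZMod 2))
    (over' : Fin n → ZMod 2)
    (Unknotted : (Fin n → ZMod 2) → Prop)
    (hunknottable : ∃ S : Finset Region,
      Unknotted (fun c => over' c + ∑ R ∈ S, M R c)) :
    ((sInf {k : ℕ | ∃ P : Finset Region, P.card = k ∧
        Unknotted (fun c => over' c + ∑ R ∈ P, M R c)} : ℕ) : ℚ)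
      ≤ (n : ℚ) / 2 + 1 := by
  classical
  obtain ⟨S, hS⟩ := hunknottable
  -- color classes
  set B : Finset Region := Finset.univ.filter (fun R => col R = true) with hBdef
  set W : Finset Region := Finset.univ.filter (fun R => col R = false) with hWdef
  -- sum of M over a full color class vanishes
  have hclass : ∀ (t : Bool) (c : Fin n),
      ∑ R ∈ Finset.univ.filter (fun R => col R = t), M R c = 0 := by
    intro t c
    have hMite : ∀ R, M R c = ∑ i : Fin 4, if corner c i = R then (1 : ZMod 2) else 0 := by
      intro R
      rw [hM]
      rw [Finset.card_filter]
      push_cast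
      simp
    calc ∑ R ∈ Finset.univ.filter (fun R => col R = t), M R c
        = ∑ R ∈ Finset.univ.filter (fun R => col R = t),
            ∑ i : Fin 4, if corner c i = R then (1 : ZMod 2) else 0 := by
          exact Finset.sum_congr rfl (fun R _ => hMite R)
      _ = ∑ i : Fin 4, ∑ R ∈ Finset.univ.filter (fun R => col R = t),
            if corner c i = R then (1 : ZMod 2) else 0 := Finset.sum_comm
      _ = ∑ i : Fin 4, if col (corner c i) = t then (1 : ZMod 2) else 0 := by
          refine Finset.sum_congr rfl (fun i _ => ?_)
          rw [Finset.sum_ite_eq]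
          simp
      _ = 0 := by
          rw [Fin.sum_univ_four]
          have h01 : col (corner c 1) = ! col (corner c 0) := by
            have := hcol c 0
            simp only [show (0 + 1 : Fin 4) = 1 by decide] at this
            cases h : col (corner c 0) <;> cases h' : col (corner c 1) <;>
              simp_all
          have h23 : col (corner c 3) = ! col (corner c 2) := by
            have := hcol c 2
            simp only [show (2 + 1 : Fin 4) = 3 by decide] at this
            cases h : col (corner c 2) <;> cases h' : col (corner c 3) <;>
              simp_all
          rw [h01, h23]
          cases col (corner c 0) <;> cases col (corner c 2) <;> cases t <;>
            simp <;> decide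
  -- split S into its color pieces
  set SB : Finset Region := S.filter (fun R => col R = true) with hSBdef
  set SW : Finset Region := S.filter (fun R => col R = false) with hSWdef
  have hSB_sub : SB ⊆ B := Finset.filter_subset_filter _ (Finset.subset_univ S)
  have hSW_sub : SW ⊆ W := Finset.filter_subset_filter _ (Finset.subset_univ S)
  set PB : Finset Region := if 2 * SB.card ≤ B.card then SB else B \ SB with hPBdef
  set PW : Finset Region := if 2 * SW.card ≤ W.card then SW else W \ SW with hPWdef
  have hPB_sub : PB ⊆ B := by
    rw [hPBdef]; split
    · exact hSB_sub
    · exact Finset.sdiff_subset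
  have hPW_sub : PW ⊆ W := by
    rw [hPWdef]; split
    · exact hSW_sub
    · exact Finset.sdiff_subset
  have hBW : Disjoint B W := by
    rw [hBdef, hWdef]
    simp [Finset.disjoint_filter]
  have hPdisj : Disjoint PB PW := hBW.mono hPB_sub hPW_sub
  set P : Finset Region := PB ∪ PW with hPdef
  -- same effect
  have hsameB : ∀ c, ∑ R ∈ PB, M R c = ∑ R ∈ SB, M R c := by
    intro c
    rw [hPBdef]; split
    · rfl
    · rw [Finset.sum_sdiff_eq_sub hSB_sub, hclass true c]
      have : ∀ x : ZMod 2, (0 : ZMod 2) - x = x := by decide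
      exact this _
  have hsameW : ∀ c, ∑ R ∈ PW, M R c = ∑ R ∈ SW, M R c := by
    intro c
    rw [hPWdef]; split
    · rfl
    · rw [Finset.sum_sdiff_eq_sub hSW_sub, hclass false c]
      have : ∀ x : ZMod 2, (0 : ZMod 2) - x = x := by decide
      exact this _
  have hsame : ∀ c, ∑ R ∈ P, M R c = ∑ R ∈ S, M R c := by
    intro c
    rw [hPdef, Finset.sum_union hPdisj, hsameB c, hsameW c,
      ← Finset.sum_filter_add_sum_filter_not S (fun R => col R = true)]
    congr 1
    apply Finset.sum_congr _ (fun _ _ => rfl)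
    rw [hSWdef]
    apply Finset.filter_congr
    intro x _
    simp
  have hPun : Unknotted (fun c => over' c + ∑ R ∈ P, M R c) := by
    have : (fun c => over' c + ∑ R ∈ P, M R c)
        = (fun c => over' c + ∑ R ∈ S, M R c) := by
      funext c; rw [hsame c]
    rw [this]; exact hS
  -- cardinality bound
  have hcardB : 2 * PB.card ≤ B.card := by
    rw [hPBdef]; split
    · assumption
    · have h1 : SB.card ≤ B.card := Finset.card_le_card hSB_sub
      have h2 : ¬ 2 * SB.card ≤ B.card := by assumption
      rw [Finset.card_sdiff_of_subset hSB_sub]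
      omega
  have hcardW : 2 * PW.card ≤ W.card := by
    rw [hPWdef]; split
    · assumption
    · have h1 : SW.card ≤ W.card := Finset.card_le_card hSW_sub
      have h2 : ¬ 2 * SW.card ≤ W.card := by assumption
      rw [Finset.card_sdiff_of_subset hSW_sub]
      omega
  have hBWcard : B.card + W.card = n + 2 := by
    rw [← heuler, ← Finset.card_union_of_disjoint hBW]
    rw [← Finset.card_univ]
    congr 1
    rw [hBdef, hWdef]
    ext x
    simp only [Finset.mem_union, Finset.mem_filter, Finset.mem_univ, true_and]
    cases col x <;> simp
  have hPcard : 2 * P.card ≤ n + 2 := by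
    rw [hPdef, Finset.card_union_of_disjoint hPdisj]
    omega
  -- conclude
  have hmem : P.card ∈ {k : ℕ | ∃ P' : Finset Region, P'.card = k ∧
      Unknotted (fun c => over' c + ∑ R ∈ P', M R c)} := ⟨P, rfl, hPun⟩
  have hinf : sInf {k : ℕ | ∃ P' : Finset Region, P'.card = k ∧
      Unknotted (fun c => over' c + ∑ R ∈ P', M R c)} ≤ P.card := Nat.sInf_le hmem
  have h1 : ((sInf {k : ℕ | ∃ P' : Finset Region, P'.card = k ∧
      Unknotted (fun c => over' c + ∑ R ∈ P', M R c)} : ℕ) : ℚ) ≤ (P.card : ℚ) := by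
    exact_mod_cast hinf
  have h2 : (P.card : ℚ) ≤ (n : ℚ) / 2 + 1 := by
    have : (2 * P.card : ℚ) ≤ (n : ℚ) + 2 := by exact_mod_cast hPcard
    linarith
  exact le_trans h1 h2
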